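/- Let p ≥ 4 be an integer, 1 ≤ a ≤ p−2 and 2 ≤ b ≤ p−1. For every integer L ≥ 2 and every real q with 0 < q < 1, B^p_{a,b}(L,b+1) = B^p_{a,b}(L−1,b+1) + q^{L−1}(q^{L−1} − 1) B^p_{a,b}(L−2,b+1) + q^{L−a+b} B̃^p_{a,b+1}(L−1,b+3) + q^{L−1} B̃^p_{a,b−1}(L−1,b+1). -/

import Mathlib

open Finset

noncomputable section

/-- `(q)_k = ∏_{j=1}^k (1 - q^j)`. -/
def qPoch (q : ℝ) (k : ℕ) : ℝ := ∏ j ∈ Finset.range k, (1 - q ^ (j + 1))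

/-- The Andrews–Baxter `q`-trinomial coefficient `T^n(L,A)`. -/
def qTri (q : ℝ) (n : ℤ) (L : ℕ) (A : ℤ) : ℝ :=
  if |A| ≤ (L : ℤ) then
    ∑ j ∈ Finset.range (L + 1),
      if 0 ≤ (j : ℤ) + A ∧ 0 ≤ (L : ℤ) - 2 * j - A then
        q ^ ((j : ℤ) * ((j : ℤ) + A - n)) * qPoch q L /
          (qPoch q j * qPoch q (((j : ℤ) + A).toNat) * qPoch q (((L : ℤ) - 2 * j - A).toNat))
      else 0
  else 0

/-- Bosonic polynomial `B^p_{a,b}(L,s)`. -/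
def Bpoly (q : ℝ) (p a b s : ℤ) (L : ℕ) : ℝ :=
  ∑' j : ℤ,
    (q ^ (p * (p + 1) * j ^ 2 + j * ((p + 1) * a - p * s)) * qTri q 0 L (2 * p * j + a - b)
      - q ^ ((p * j + a) * ((p + 1) * j + s)) * qTri q 0 L (2 * p * j + a + b))

/-- Bosonic polynomial `B̃^p_{a,b}(L,s)`. -/
def Btpoly (q : ℝ) (p a b s : ℤ) (L : ℕ) : ℝ :=
  ∑' j : ℤ,
    (q ^ (p * (p + 1) * j ^ 2 + j * ((p + 1) * a - p * s)) * qTri q 1 L (2 * p * j + a - b)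
      - q ^ (p * (p + 1) * j ^ 2 + j * ((p + 1) * a + p * (s - 2)) + a * (s - 1) - b)
        * qTri q 1 L (2 * p * j + a + b))


set_option maxHeartbeats 1000000

def tfun (q : ℝ) (n : ℤ) (L : ℕ) (A : ℤ) (j : ℕ) : ℝ :=
  if 0 ≤ (j : ℤ) + A ∧ 0 ≤ (L : ℤ) - 2 * j - A then
    q ^ ((j : ℤ) * ((j : ℤ) + A - n)) * qPoch q L /
      (qPoch q j * qPoch q (((j : ℤ) + A).toNat) * qPoch q (((L : ℤ) - 2 * j - A).toNat))
  else 0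

lemma qPoch_pos {q : ℝ} (hq0 : 0 < q) (hq1 : q < 1) (k : ℕ) : 0 < qPoch q k := by
  refine Finset.prod_pos fun j _ => ?_
  have : q ^ (j+1) < 1 := pow_lt_one₀ hq0.le hq1 (Nat.succ_ne_zero j)
  linarith

lemma qPoch_succ (q : ℝ) (k : ℕ) : qPoch q (k+1) = qPoch q k * (1 - q ^ (k+1)) :=
  Finset.prod_range_succ _ _

lemma qTri_eq (q : ℝ) (n : ℤ) (L : ℕ) (A : ℤ) :
    qTri q n L A = ∑ j ∈ Finset.range (L + 1), tfun q n L A j := by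
  unfold qTri tfun
  split_ifs with h
  · rfl
  · symm
    refine Finset.sum_eq_zero fun j hj => ?_
    rw [if_neg]
    rintro ⟨h1, h2⟩
    simp only [Finset.mem_range] at hj
    rw [abs_le, not_and_or] at h
    push_neg at h
    omega

lemma tfun_zero_of_ge (q : ℝ) (n : ℤ) (L : ℕ) (A : ℤ) {j : ℕ} (hj : L < j) :
    tfun q n L A j = 0 := by
  unfold tfun
  rw [if_neg]
  rintro ⟨h1, h2⟩
  omega

lemma qTri_eq' (q : ℝ) (n : ℤ) (L : ℕ) (A : ℤ) {N : ℕ} (hN : L + 1 ≤ N) :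
    qTri q n L A = ∑ j ∈ Finset.range N, tfun q n L A j := by
  rw [qTri_eq]
  refine Finset.sum_subset (Finset.range_subset_range.2 hN) fun j _ hj => ?_
  simp only [Finset.mem_range, not_lt] at hj
  exact tfun_zero_of_ge q n L A (by omega)

lemma one_sub_pow_ne {q : ℝ} (hq0 : 0 < q) (hq1 : q < 1) (k : ℕ) :
    (1 : ℝ) - q ^ (k+1) ≠ 0 := by
  have : q ^ (k+1) < 1 := pow_lt_one₀ hq0.le hq1 (Nat.succ_ne_zero _)
  linarith

lemma tfun_G {q : ℝ} (hq0 : 0 < q) (hq1 : q < 1) (M : ℕ) (A : ℤ) (j : ℕ) :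
    tfun q 1 (M+1) A j
      = q ^ A * tfun q 0 (M+1) A j + (1 - q ^ (M+1)) * tfun q 0 M (A-1) j := by
  unfold tfun
  have hcast : ((M+1 : ℕ) : ℤ) = (M : ℤ) + 1 := by push_cast; ring
  by_cases hC : 0 ≤ (j : ℤ) + A ∧ 0 ≤ ((M+1 : ℕ) : ℤ) - 2 * j - A
  · by_cases hx1 : 1 ≤ (j : ℤ) + A
    · -- main case
      have hC' : 0 ≤ (j : ℤ) + (A-1) ∧ 0 ≤ (M : ℤ) - 2 * j - (A-1) := by
        constructor <;> omega
      rw [if_pos hC, if_pos hC, if_pos hC']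
      set x0 : ℕ := ((j : ℤ) + (A-1)).toNat with hx0
      have hxx : ((j : ℤ) + A).toNat = x0 + 1 := by omega
      have hyy : (((M+1:ℕ) : ℤ) - 2 * j - A).toNat = ((M:ℤ) - 2*j - (A-1)).toNat := by omega
      have hx0c : ((x0 : ℕ) : ℤ) = (j : ℤ) + A - 1 := by omega
      rw [hxx, hyy, qPoch_succ q x0, qPoch_succ q M]
      rw [show ((j:ℤ) * ((j:ℤ) + (A-1) - 0)) = (j:ℤ) * ((j:ℤ) + A - 1) from by ring,
        show ((j:ℤ) * ((j:ℤ) + A - 0)) = (j:ℤ) * ((j:ℤ) + A) from by ring]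
      have hPj := (qPoch_pos hq0 hq1 j).ne'
      have hPx := (qPoch_pos hq0 hq1 x0).ne'
      have hPy := (qPoch_pos hq0 hq1 (((M:ℤ) - 2*j - (A-1)).toNat)).ne'
      have hPM := (qPoch_pos hq0 hq1 M).ne'
      have hx0pos : (1 : ℝ) - q ^ (x0+1) ≠ 0 := by
        have : q ^ (x0+1) < 1 := pow_lt_one₀ hq0.le hq1 (Nat.succ_ne_zero _)
        linarith
      have hE1 : q ^ ((j:ℤ) * ((j:ℤ) + A - 1))
          = q ^ A * q ^ ((j:ℤ) * ((j:ℤ) + A)) / q ^ (x0+1) := by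
        rw [eq_div_iff (pow_ne_zero _ hq0.ne'), ← zpow_natCast q (x0+1),
          ← zpow_add₀ hq0.ne', ← zpow_add₀ hq0.ne']
        congr 1
        push_cast [hx0c]
        ring
      rw [hE1]
      have hqx : (q:ℝ) ^ (x0+1) ≠ 0 := pow_ne_zero _ hq0.ne'
      field_simp
      ring
    · -- j + A = 0
      have hA : A = -(j:ℤ) := by omega
      have hC' : ¬ (0 ≤ (j : ℤ) + (A-1) ∧ 0 ≤ (M : ℤ) - 2 * j - (A-1)) := by
        intro h; omega
      rw [if_pos hC, if_pos hC, if_neg hC']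
      have : q ^ ((j:ℤ) * ((j:ℤ) + A - 1)) = q ^ A * q ^ ((j:ℤ) * ((j:ℤ) + A - 0)) := by
        rw [← zpow_add₀ hq0.ne']
        congr 1
        rw [hA]; ring
      rw [this]; ring
  · have hC' : ¬ (0 ≤ (j : ℤ) + (A-1) ∧ 0 ≤ (M : ℤ) - 2 * j - (A-1)) := by
      intro h; exact hC ⟨by omega, by omega⟩
    rw [if_neg hC, if_neg hC, if_neg hC']
    ring

lemma lemG {q : ℝ} (hq0 : 0 < q) (hq1 : q < 1) (M : ℕ) (A : ℤ) :
    qTri q 1 (M+1) A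
      = q ^ A * qTri q 0 (M+1) A + (1 - q ^ (M+1)) * qTri q 0 M (A-1) := by
  rw [qTri_eq, qTri_eq, qTri_eq' q 0 M (A-1) (by omega : M + 1 ≤ M + 1 + 1),
    Finset.mul_sum, Finset.mul_sum, ← Finset.sum_add_distrib]
  exact Finset.sum_congr rfl fun j _ => tfun_G hq0 hq1 M A j

lemma tfun_F0_succ {q : ℝ} (hq0 : 0 < q) (hq1 : q < 1) (M : ℕ) (A : ℤ) (j : ℕ) :
    tfun q 0 (M+1) A (j+1)
      = tfun q 0 M A (j+1) + q ^ ((M:ℤ)+1-A) * tfun q 1 M (A-1) (j+1)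
        + q ^ ((M:ℤ)+1+A) * tfun q 0 (M) (A+1) j := by
  unfold tfun
  push_cast
  by_cases h1 : 0 ≤ (j:ℤ) + 1 + A ∧ 0 ≤ (M:ℤ) + 1 - 2 * ((j:ℤ)+1) - A
  · -- main case
    have h4 : 0 ≤ (j:ℤ) + (A+1) ∧ 0 ≤ (M:ℤ) - 2 * (j:ℤ) - (A+1) := by
      constructor <;> omega
    obtain ⟨x, y, hx, hy⟩ : ∃ x y : ℕ, (x:ℤ) = (j:ℤ) + 1 + A ∧ (y:ℤ) = (M:ℤ) + 1 - 2*((j:ℤ)+1) - A :=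
      ⟨((j:ℤ)+1+A).toNat, ((M:ℤ)+1-2*((j:ℤ)+1)-A).toNat, by omega, by omega⟩
    have hM : M + 1 = x + y + (j+1) := by omega
    rw [if_pos h1, if_pos h4,
      show ((j:ℤ) + 1 + A).toNat = x from by omega,
      show ((M:ℤ) + 1 - 2*((j:ℤ)+1) - A).toNat = y from by omega,
      show ((j:ℤ) + (A+1)).toNat = x from by omega,
      show ((M:ℤ) - 2*(j:ℤ) - (A+1)).toNat = y from by omega,
      show ((j:ℤ) + 1 + (A-1)).toNat = x - 1 from by omega,
      show ((M:ℤ) - 2*((j:ℤ)+1) - (A-1)).toNat = y from by omega,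
      show ((M:ℤ) - 2*((j:ℤ)+1) - A).toNat = y - 1 from by omega,
      qPoch_succ q M, qPoch_succ q j, hM,
      show ((j:ℤ)+1) * ((j:ℤ)+1+A-0) = ((j:ℤ)+1)*((j:ℤ)+1+A) from by ring,
      show ((j:ℤ)) * ((j:ℤ)+(A+1)-0) = (j:ℤ)*((j:ℤ)+A+1) from by ring]
    have hD3 : q ^ ((j:ℤ)*((j:ℤ)+A+1))
        = q ^ (((j:ℤ)+1)*((j:ℤ)+1+A)) * q ^ (x+y) / q ^ ((M:ℤ)+1+A) := by
      rw [eq_div_iff (zpow_ne_zero _ hq0.ne'), ← zpow_natCast q (x+y),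
        ← zpow_add₀ hq0.ne', ← zpow_add₀ hq0.ne']
      congr 1
      push_cast
      linear_combination -hx - hy
    rw [hD3]
    have hPj := (qPoch_pos hq0 hq1 j).ne'
    have hPM := (qPoch_pos hq0 hq1 M).ne'
    have hqMA := zpow_ne_zero ((M:ℤ)+1-A) hq0.ne'
    have hqMA' := zpow_ne_zero ((M:ℤ)+1+A) hq0.ne'
    have hP0 : qPoch q 0 = 1 := by simp [qPoch]
    by_cases hx1 : 1 ≤ x
    · obtain ⟨x', rfl⟩ : ∃ x', x = x' + 1 := ⟨x - 1, by omega⟩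
      have h3 : 0 ≤ (j:ℤ) + 1 + (A-1) ∧ 0 ≤ (M:ℤ) - 2 * ((j:ℤ)+1) - (A-1) := by
        constructor <;> omega
      rw [if_pos h3, show x' + 1 - 1 = x' from rfl, qPoch_succ q x']
      have hD2 : q ^ (((j:ℤ)+1) * ((j:ℤ)+1+(A-1)-1))
          = q ^ (((j:ℤ)+1)*((j:ℤ)+1+A)) * q ^ (y:ℕ) / q ^ ((M:ℤ)+1-A) := by
        rw [eq_div_iff (zpow_ne_zero _ hq0.ne'), ← zpow_natCast q y,
          ← zpow_add₀ hq0.ne', ← zpow_add₀ hq0.ne']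
        congr 1
        linear_combination -hy
      rw [hD2]
      have hPx := (qPoch_pos hq0 hq1 x').ne'
      have h1x := one_sub_pow_ne hq0 hq1 x'
      by_cases hy1 : 1 ≤ y
      · obtain ⟨y', rfl⟩ : ∃ y', y = y' + 1 := ⟨y - 1, by omega⟩
        have h2 : 0 ≤ (j:ℤ) + 1 + A ∧ 0 ≤ (M:ℤ) - 2 * ((j:ℤ)+1) - A := by
          constructor <;> omega
        rw [if_pos h2, show y' + 1 - 1 = y' from rfl, qPoch_succ q y']
        have hPy := (qPoch_pos hq0 hq1 y').ne'
        have h1y := one_sub_pow_ne hq0 hq1 y'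
        have h1j := one_sub_pow_ne hq0 hq1 j
        set u : ℝ := 1 - q ^ (j+1) with hu
        set v : ℝ := 1 - q ^ (x'+1) with hv
        set w : ℝ := 1 - q ^ (y'+1) with hw
        have hsplit : (1:ℝ) - q ^ (x'+1+(y'+1)+(j+1))
            = w + q^(y'+1)*v + q^(x'+1)*(q^(y'+1)*u) := by
          rw [hu, hv, hw]; ring
        rw [hsplit]
        field_simp
        ring
      · obtain rfl : y = 0 := by omega
        have h2 : ¬ (0 ≤ (j:ℤ) + 1 + A ∧ 0 ≤ (M:ℤ) - 2 * ((j:ℤ)+1) - A) := by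
          intro h; omega
        rw [if_neg h2, hP0]
        have h1j := one_sub_pow_ne hq0 hq1 j
        set u : ℝ := 1 - q ^ (j+1) with hu
        set v : ℝ := 1 - q ^ (x'+1) with hv
        have hsplit : (1:ℝ) - q ^ (x'+1+0+(j+1)) = v + q^(x'+1)*u := by
          rw [hu, hv]; ring
        rw [hsplit]
        field_simp
        ring
    · obtain rfl : x = 0 := by omega
      have h3 : ¬ (0 ≤ (j:ℤ) + 1 + (A-1) ∧ 0 ≤ (M:ℤ) - 2 * ((j:ℤ)+1) - (A-1)) := by
        intro h; omega
      rw [if_neg h3, hP0]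
      by_cases hy1 : 1 ≤ y
      · obtain ⟨y', rfl⟩ : ∃ y', y = y' + 1 := ⟨y - 1, by omega⟩
        have h2 : 0 ≤ (j:ℤ) + 1 + A ∧ 0 ≤ (M:ℤ) - 2 * ((j:ℤ)+1) - A := by
          constructor <;> omega
        rw [if_pos h2, show y' + 1 - 1 = y' from rfl, qPoch_succ q y']
        have hPy := (qPoch_pos hq0 hq1 y').ne'
        have h1y := one_sub_pow_ne hq0 hq1 y'
        have h1j := one_sub_pow_ne hq0 hq1 j
        set u : ℝ := 1 - q ^ (j+1) with hu
        set w : ℝ := 1 - q ^ (y'+1) with hw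
        have hsplit : (1:ℝ) - q ^ (0+(y'+1)+(j+1)) = w + q^(y'+1)*u := by
          rw [hu, hw]; ring
        rw [hsplit]
        field_simp
        ring
      · obtain rfl : y = 0 := by omega
        have h2 : ¬ (0 ≤ (j:ℤ) + 1 + A ∧ 0 ≤ (M:ℤ) - 2 * ((j:ℤ)+1) - A) := by
          intro h; omega
        rw [if_neg h2]
        have h1j := one_sub_pow_ne hq0 hq1 j
        set u : ℝ := 1 - q ^ (j+1) with hu
        have hsplit : (1:ℝ) - q ^ (0+0+(j+1)) = u := by rw [hu]; ring
        rw [hsplit]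
        field_simp
        ring
  · rw [if_neg h1]
    have h2 : ¬ (0 ≤ (j:ℤ) + 1 + A ∧ 0 ≤ (M:ℤ) - 2 * ((j:ℤ)+1) - A) := by
      intro h; exact h1 ⟨h.1, by omega⟩
    have h3 : ¬ (0 ≤ (j:ℤ) + 1 + (A-1) ∧ 0 ≤ (M:ℤ) - 2 * ((j:ℤ)+1) - (A-1)) := by
      intro h; exact h1 ⟨by omega, by omega⟩
    have h4 : ¬ (0 ≤ (j:ℤ) + (A+1) ∧ 0 ≤ (M:ℤ) - 2 * (j:ℤ) - (A+1)) := by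
      intro h; exact h1 ⟨by omega, by omega⟩
    rw [if_neg h2, if_neg h3, if_neg h4]
    ring

lemma tfun_F0_zero {q : ℝ} (hq0 : 0 < q) (hq1 : q < 1) (M : ℕ) (A : ℤ) :
    tfun q 0 (M+1) A 0
      = tfun q 0 M A 0 + q ^ ((M:ℤ)+1-A) * tfun q 1 M (A-1) 0 := by
  unfold tfun
  push_cast
  have hP0 : qPoch q 0 = 1 := by simp [qPoch]
  by_cases hA0 : 0 ≤ A
  · by_cases hAM1 : A ≤ (M:ℤ) + 1
    · -- 0 ≤ A ≤ M+1
      by_cases hA1 : 1 ≤ A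
      · by_cases hAM : A ≤ (M:ℤ)
        · -- 1 ≤ A ≤ M : all three conditions hold
          have c1 : 0 ≤ (0:ℤ) + A ∧ 0 ≤ (M:ℤ) + 1 - (0:ℤ) - A := by
            constructor <;> omega
          have c2 : 0 ≤ (0:ℤ) + A ∧ 0 ≤ (M:ℤ) - (0:ℤ) - A := by
            constructor <;> omega
          have c3 : 0 ≤ (0:ℤ) + (A-1) ∧ 0 ≤ (M:ℤ) - (0:ℤ) - (A-1) := by
            constructor <;> omega
          rw [if_pos c1, if_pos c2, if_pos c3]
          obtain ⟨x', hx⟩ : ∃ x', ((x':ℕ):ℤ) = A - 1 := ⟨(A-1).toNat, by omega⟩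
          obtain ⟨z', hz⟩ : ∃ z', ((z':ℕ):ℤ) = (M:ℤ) - A := ⟨((M:ℤ)-A).toNat, by omega⟩
          rw [show ((0:ℤ) + A).toNat = x' + 1 from by omega,
            show ((M:ℤ) + 1 - (0:ℤ) - A).toNat = z' + 1 from by omega,
            show ((M:ℤ) - (0:ℤ) - A).toNat = z' from by omega,
            show ((0:ℤ) + (A-1)).toNat = x' from by omega,
            show ((M:ℤ) - (0:ℤ) - (A-1)).toNat = z' + 1 from by omega,
            show ((0:ℤ) * ((0:ℤ) + A - 0)) = 0 from by ring,
            show ((0:ℤ) * ((0:ℤ) + (A-1) - 1)) = 0 from by ring,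
            zpow_zero, hP0, qPoch_succ q M, qPoch_succ q x', qPoch_succ q z',
            show M + 1 = (x'+1) + (z'+1) from by omega]
          have hE : q ^ ((M:ℤ)+1-A) = q ^ ((z'+1 : ℕ)) := by
            rw [← zpow_natCast q (z'+1)]
            congr 1
            push_cast
            omega
          rw [hE]
          have hPx := (qPoch_pos hq0 hq1 x').ne'
          have hPz := (qPoch_pos hq0 hq1 z').ne'
          have hPM := (qPoch_pos hq0 hq1 M).ne'
          have h1x := one_sub_pow_ne hq0 hq1 x'
          have h1z := one_sub_pow_ne hq0 hq1 z'
          set v : ℝ := 1 - q ^ (x'+1) with hv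
          set w : ℝ := 1 - q ^ (z'+1) with hw
          have hsplit : (1:ℝ) - q ^ (x'+1+(z'+1)) = w + q^(z'+1) * v := by
            rw [hv, hw]; ring
          rw [hsplit]
          field_simp
        · -- A = M+1
          have hAeq : A = (M:ℤ) + 1 := by omega
          have c1 : 0 ≤ (0:ℤ) + A ∧ 0 ≤ (M:ℤ) + 1 - (0:ℤ) - A := by
            constructor <;> omega
          have c2 : ¬ (0 ≤ (0:ℤ) + A ∧ 0 ≤ (M:ℤ) - (0:ℤ) - A) := by
            intro h; omega
          have c3 : 0 ≤ (0:ℤ) + (A-1) ∧ 0 ≤ (M:ℤ) - (0:ℤ) - (A-1) := by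
            constructor <;> omega
          rw [if_pos c1, if_neg c2, if_pos c3,
            show ((0:ℤ) + A).toNat = M + 1 from by omega,
            show ((M:ℤ) + 1 - (0:ℤ) - A).toNat = 0 from by omega,
            show ((0:ℤ) + (A-1)).toNat = M from by omega,
            show ((M:ℤ) - (0:ℤ) - (A-1)).toNat = 0 from by omega,
            show ((0:ℤ) * ((0:ℤ) + A - 0)) = 0 from by ring,
            show ((0:ℤ) * ((0:ℤ) + (A-1) - 1)) = 0 from by ring,
            zpow_zero, hP0,
            show q ^ ((M:ℤ)+1-A) = 1 from by rw [show (M:ℤ)+1-A = 0 from by omega, zpow_zero]]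
          have hPM1 := (qPoch_pos hq0 hq1 (M+1)).ne'
          have hPM := (qPoch_pos hq0 hq1 M).ne'
          field_simp
          ring
      · -- A = 0
        obtain rfl : A = 0 := by omega
        have c1 : 0 ≤ (0:ℤ) + (0:ℤ) ∧ 0 ≤ (M:ℤ) + 1 - (0:ℤ) - 0 := by
          constructor <;> omega
        have c2 : 0 ≤ (0:ℤ) + (0:ℤ) ∧ 0 ≤ (M:ℤ) - (0:ℤ) - 0 := by
          constructor <;> omega
        have c3 : ¬ (0 ≤ (0:ℤ) + ((0:ℤ)-1) ∧ 0 ≤ (M:ℤ) - (0:ℤ) - ((0:ℤ)-1)) := by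
          intro h; omega
        rw [if_pos c1, if_pos c2, if_neg c3,
          show ((0:ℤ) + (0:ℤ)).toNat = 0 from by omega,
          show ((M:ℤ) + 1 - (0:ℤ) - (0:ℤ)).toNat = M + 1 from by omega,
          show ((M:ℤ) - (0:ℤ) - (0:ℤ)).toNat = M from by omega,
          show ((0:ℤ) * ((0:ℤ) + (0:ℤ) - 0)) = 0 from by ring, zpow_zero, hP0]
        have hPM1 := (qPoch_pos hq0 hq1 (M+1)).ne'
        have hPM := (qPoch_pos hq0 hq1 M).ne'
        field_simp
        ring
    · -- A > M+1 : all conditions fail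
      have c1 : ¬ (0 ≤ (0:ℤ) + A ∧ 0 ≤ (M:ℤ) + 1 - (0:ℤ) - A) := by intro h; omega
      have c2 : ¬ (0 ≤ (0:ℤ) + A ∧ 0 ≤ (M:ℤ) - (0:ℤ) - A) := by intro h; omega
      have c3 : ¬ (0 ≤ (0:ℤ) + (A-1) ∧ 0 ≤ (M:ℤ) - (0:ℤ) - (A-1)) := by intro h; omega
      rw [if_neg c1, if_neg c2, if_neg c3]
      ring
  · -- A < 0
    have c1 : ¬ (0 ≤ (0:ℤ) + A ∧ 0 ≤ (M:ℤ) + 1 - (0:ℤ) - A) := by intro h; omega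
    have c2 : ¬ (0 ≤ (0:ℤ) + A ∧ 0 ≤ (M:ℤ) - (0:ℤ) - A) := by intro h; omega
    have c3 : ¬ (0 ≤ (0:ℤ) + (A-1) ∧ 0 ≤ (M:ℤ) - (0:ℤ) - (A-1)) := by intro h; omega
    rw [if_neg c1, if_neg c2, if_neg c3]
    ring

lemma lemF0 {q : ℝ} (hq0 : 0 < q) (hq1 : q < 1) (M : ℕ) (A : ℤ) :
    qTri q 0 (M+1) A
      = qTri q 0 M A + q ^ ((M:ℤ)+1-A) * qTri q 1 M (A-1)
        + q ^ ((M:ℤ)+1+A) * qTri q 0 M (A+1) := by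
  rw [qTri_eq q 0 (M+1) A, qTri_eq' q 0 M A (show M+1 ≤ M+1+1 by omega),
    qTri_eq' q 1 M (A-1) (show M+1 ≤ M+1+1 by omega), qTri_eq q 0 M (A+1),
    Finset.sum_range_succ' (tfun q 0 (M+1) A) (M+1),
    Finset.sum_range_succ' (tfun q 0 M A) (M+1),
    Finset.sum_range_succ' (tfun q 1 M (A-1)) (M+1)]
  have hS : ∑ j ∈ Finset.range (M+1), tfun q 0 (M+1) A (j+1)
      = ∑ j ∈ Finset.range (M+1),
          (tfun q 0 M A (j+1) + q ^ ((M:ℤ)+1-A) * tfun q 1 M (A-1) (j+1)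
            + q ^ ((M:ℤ)+1+A) * tfun q 0 M (A+1) j) :=
    Finset.sum_congr rfl fun j _ => tfun_F0_succ hq0 hq1 M A j
  rw [hS, Finset.sum_add_distrib, Finset.sum_add_distrib, ← Finset.mul_sum, ← Finset.mul_sum,
    tfun_F0_zero hq0 hq1 M A]
  ring

lemma lemR {q : ℝ} (hq0 : 0 < q) (hq1 : q < 1) (M : ℕ) (A : ℤ) :
    qTri q 0 (M+2) A
      = qTri q 0 (M+1) A
        + q ^ ((M:ℤ)+1) * (q ^ ((M:ℤ)+1) - 1) * qTri q 0 M A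
        + q ^ ((M:ℤ)+2-A) * qTri q 1 (M+1) (A-1)
        + q ^ ((M:ℤ)+1) * qTri q 1 (M+1) (A+1) := by
  have hF := lemF0 hq0 hq1 (M+1) A
  push_cast at hF
  have hG := lemG hq0 hq1 M (A+1)
  rw [show A + 1 - 1 = A from by ring] at hG
  rw [show ((M:ℕ)+2 : ℕ) = (M+1)+1 from by ring] at *
  rw [hF]
  have e1 : q ^ ((M:ℤ)+1+1-A) = q ^ ((M:ℤ)+2-A) := by
    congr 1 <;> ring
  have e2 : q ^ ((M:ℤ)+1+1+A) = q ^ ((M:ℤ)+1) * q ^ (A+1) := by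
    rw [← zpow_add₀ hq0.ne']
    congr 1 <;> ring
  have e3 : (q:ℝ) ^ ((M:ℕ)+1) = q ^ ((M:ℤ)+1) := by
    rw [← zpow_natCast q (M+1)]
    congr 1 <;> push_cast <;> ring
  rw [e1, e2]
  rw [e3] at hG
  linear_combination (-(q ^ ((M:ℤ)+1))) * hG

lemma qTri_zero (q : ℝ) (n : ℤ) (L : ℕ) (A : ℤ) (h : (L:ℤ) < |A|) : qTri q n L A = 0 := by
  unfold qTri
  rw [if_neg (not_le.2 h)]

lemma abs_big {p d j N L' : ℤ} (hp : 4 ≤ p) (hj : N + 1 ≤ |j|) (hd : -N ≤ d ∧ d ≤ N)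
    (hL : L' ≤ N) (hN : 0 ≤ N) : L' < |2 * p * j + d| := by
  have h1 : |2 * p * j| = 2 * p * |j| := by
    rw [abs_mul, abs_of_nonneg (by linarith : (0:ℤ) ≤ 2 * p)]
  have h2 : 8 * (N + 1) ≤ 2 * p * |j| := by nlinarith [abs_nonneg j]
  have h3 := abs_add_le (2 * p * j + d) (-d)
  rw [abs_neg, show 2 * p * j + d + -d = 2 * p * j from by ring] at h3
  have hd' : |d| ≤ N := abs_le.2 hd
  omega

/-- For integers `p ≥ 4`, `1 ≤ a ≤ p-2`, `2 ≤ b ≤ p-1`, every `L ≥ 2` and `0 < q < 1`: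
`B^p_{a,b}(L,b+1) = B^p_{a,b}(L-1,b+1) + q^{L-1}(q^{L-1}-1) B^p_{a,b}(L-2,b+1)
  + q^{L-a+b} B̃^p_{a,b+1}(L-1,b+3) + q^{L-1} B̃^p_{a,b-1}(L-1,b+1)`. -/
theorem Bpoly_recurrence_general (p a b : ℤ) (hp : 4 ≤ p) (ha1 : 1 ≤ a) (ha2 : a ≤ p - 2)
    (hb1 : 2 ≤ b) (hb2 : b ≤ p - 1)
    (L : ℕ) (hL : 2 ≤ L) (q : ℝ) (hq0 : 0 < q) (hq1 : q < 1) :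
    Bpoly q p a b (b + 1) L
      = Bpoly q p a b (b + 1) (L - 1)
        + q ^ ((L : ℤ) - 1) * (q ^ ((L : ℤ) - 1) - 1) * Bpoly q p a b (b + 1) (L - 2)
        + q ^ ((L : ℤ) - a + b) * Btpoly q p a (b + 1) (b + 3) (L - 1)
        + q ^ ((L : ℤ) - 1) * Btpoly q p a (b - 1) (b + 1) (L - 1) := by
  obtain ⟨M, rfl⟩ : ∃ M, L = M + 2 := ⟨L - 2, by omega⟩
  rw [show M + 2 - 1 = M + 1 from by omega, show M + 2 - 2 = M from by omega]
  unfold Bpoly Btpoly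
  set N : ℤ := (M:ℤ) + a + b + 10 with hNdef
  have hN0 : 0 ≤ N := by omega
  have habs : ∀ j : ℤ, j ∉ Finset.Icc (-N) N → N + 1 ≤ |j| := by
    intro j hj
    simp only [Finset.mem_Icc] at hj
    rcases abs_cases j with ⟨h, _⟩ | ⟨h, _⟩ <;> omega
  -- rewrite all five tsums as finite sums
  have T1 : (∑' j : ℤ,
      (q ^ (p * (p + 1) * j ^ 2 + j * ((p + 1) * a - p * (b+1))) * qTri q 0 (M+2) (2 * p * j + a - b)
        - q ^ ((p * j + a) * ((p + 1) * j + (b+1))) * qTri q 0 (M+2) (2 * p * j + a + b)))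
      = ∑ j ∈ Finset.Icc (-N) N,
      (q ^ (p * (p + 1) * j ^ 2 + j * ((p + 1) * a - p * (b+1))) * qTri q 0 (M+2) (2 * p * j + a - b)
        - q ^ ((p * j + a) * ((p + 1) * j + (b+1))) * qTri q 0 (M+2) (2 * p * j + a + b)) := by
    refine tsum_eq_sum fun j hj => ?_
    rw [show 2 * p * j + a - b = 2 * p * j + (a - b) from by ring,
      qTri_zero q 0 (M+2) _ (abs_big hp (habs j hj) ⟨by omega, by omega⟩ (by push_cast; omega) hN0),
      show 2 * p * j + a + b = 2 * p * j + (a + b) from by ring,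
      qTri_zero q 0 (M+2) _ (abs_big hp (habs j hj) ⟨by omega, by omega⟩ (by push_cast; omega) hN0)]
    ring
  have T2 : (∑' j : ℤ,
      (q ^ (p * (p + 1) * j ^ 2 + j * ((p + 1) * a - p * (b+1))) * qTri q 0 (M+1) (2 * p * j + a - b)
        - q ^ ((p * j + a) * ((p + 1) * j + (b+1))) * qTri q 0 (M+1) (2 * p * j + a + b)))
      = ∑ j ∈ Finset.Icc (-N) N,
      (q ^ (p * (p + 1) * j ^ 2 + j * ((p + 1) * a - p * (b+1))) * qTri q 0 (M+1) (2 * p * j + a - b)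
        - q ^ ((p * j + a) * ((p + 1) * j + (b+1))) * qTri q 0 (M+1) (2 * p * j + a + b)) := by
    refine tsum_eq_sum fun j hj => ?_
    rw [show 2 * p * j + a - b = 2 * p * j + (a - b) from by ring,
      qTri_zero q 0 (M+1) _ (abs_big hp (habs j hj) ⟨by omega, by omega⟩ (by push_cast; omega) hN0),
      show 2 * p * j + a + b = 2 * p * j + (a + b) from by ring,
      qTri_zero q 0 (M+1) _ (abs_big hp (habs j hj) ⟨by omega, by omega⟩ (by push_cast; omega) hN0)]
    ring
  have T3 : (∑' j : ℤ,
      (q ^ (p * (p + 1) * j ^ 2 + j * ((p + 1) * a - p * (b+1))) * qTri q 0 M (2 * p * j + a - b)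
        - q ^ ((p * j + a) * ((p + 1) * j + (b+1))) * qTri q 0 M (2 * p * j + a + b)))
      = ∑ j ∈ Finset.Icc (-N) N,
      (q ^ (p * (p + 1) * j ^ 2 + j * ((p + 1) * a - p * (b+1))) * qTri q 0 M (2 * p * j + a - b)
        - q ^ ((p * j + a) * ((p + 1) * j + (b+1))) * qTri q 0 M (2 * p * j + a + b)) := by
    refine tsum_eq_sum fun j hj => ?_
    rw [show 2 * p * j + a - b = 2 * p * j + (a - b) from by ring,
      qTri_zero q 0 M _ (abs_big hp (habs j hj) ⟨by omega, by omega⟩ (by push_cast; omega) hN0),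
      show 2 * p * j + a + b = 2 * p * j + (a + b) from by ring,
      qTri_zero q 0 M _ (abs_big hp (habs j hj) ⟨by omega, by omega⟩ (by push_cast; omega) hN0)]
    ring
  have T4 : (∑' j : ℤ,
      (q ^ (p * (p + 1) * j ^ 2 + j * ((p + 1) * a - p * (b+3))) * qTri q 1 (M+1) (2 * p * j + a - (b+1))
        - q ^ (p * (p + 1) * j ^ 2 + j * ((p + 1) * a + p * ((b+3) - 2)) + a * ((b+3) - 1) - (b+1))
          * qTri q 1 (M+1) (2 * p * j + a + (b+1))))
      = ∑ j ∈ Finset.Icc (-N) N,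
      (q ^ (p * (p + 1) * j ^ 2 + j * ((p + 1) * a - p * (b+3))) * qTri q 1 (M+1) (2 * p * j + a - (b+1))
        - q ^ (p * (p + 1) * j ^ 2 + j * ((p + 1) * a + p * ((b+3) - 2)) + a * ((b+3) - 1) - (b+1))
          * qTri q 1 (M+1) (2 * p * j + a + (b+1))) := by
    refine tsum_eq_sum fun j hj => ?_
    rw [show 2 * p * j + a - (b+1) = 2 * p * j + (a - (b+1)) from by ring,
      qTri_zero q 1 (M+1) _ (abs_big hp (habs j hj) ⟨by omega, by omega⟩ (by push_cast; omega) hN0),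
      show 2 * p * j + a + (b+1) = 2 * p * j + (a + (b+1)) from by ring,
      qTri_zero q 1 (M+1) _ (abs_big hp (habs j hj) ⟨by omega, by omega⟩ (by push_cast; omega) hN0)]
    ring
  have T5 : (∑' j : ℤ,
      (q ^ (p * (p + 1) * j ^ 2 + j * ((p + 1) * a - p * (b+1))) * qTri q 1 (M+1) (2 * p * j + a - (b-1))
        - q ^ (p * (p + 1) * j ^ 2 + j * ((p + 1) * a + p * ((b+1) - 2)) + a * ((b+1) - 1) - (b-1))
          * qTri q 1 (M+1) (2 * p * j + a + (b-1))))
      = ∑ j ∈ Finset.Icc (-N) N,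
      (q ^ (p * (p + 1) * j ^ 2 + j * ((p + 1) * a - p * (b+1))) * qTri q 1 (M+1) (2 * p * j + a - (b-1))
        - q ^ (p * (p + 1) * j ^ 2 + j * ((p + 1) * a + p * ((b+1) - 2)) + a * ((b+1) - 1) - (b-1))
          * qTri q 1 (M+1) (2 * p * j + a + (b-1))) := by
    refine tsum_eq_sum fun j hj => ?_
    rw [show 2 * p * j + a - (b-1) = 2 * p * j + (a - (b-1)) from by ring,
      qTri_zero q 1 (M+1) _ (abs_big hp (habs j hj) ⟨by omega, by omega⟩ (by push_cast; omega) hN0),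
      show 2 * p * j + a + (b-1) = 2 * p * j + (a + (b-1)) from by ring,
      qTri_zero q 1 (M+1) _ (abs_big hp (habs j hj) ⟨by omega, by omega⟩ (by push_cast; omega) hN0)]
    ring
  rw [T1, T2, T3, T4, T5, Finset.mul_sum, Finset.mul_sum, Finset.mul_sum,
    ← Finset.sum_add_distrib, ← Finset.sum_add_distrib, ← Finset.sum_add_distrib]
  refine Finset.sum_congr rfl fun j _ => ?_
  rw [show 2 * p * j + a - (b+1) = (2 * p * j + a - b) - 1 from by ring,
    show 2 * p * j + a + (b+1) = (2 * p * j + a + b) + 1 from by ring,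
    show 2 * p * j + a - (b-1) = (2 * p * j + a - b) + 1 from by ring,
    show 2 * p * j + a + (b-1) = (2 * p * j + a + b) - 1 from by ring,
    lemR hq0 hq1 M (2 * p * j + a - b), lemR hq0 hq1 M (2 * p * j + a + b)]
  push_cast
  rw [show ((M:ℤ)+2-1) = (M:ℤ)+1 from by ring]
  have b1 : q ^ ((M:ℤ)+2-a+b) * q ^ (p*(p+1)*j^2 + j*((p+1)*a - p*(b+3)))
      = q ^ (p*(p+1)*j^2 + j*((p+1)*a - p*(b+1))) * q ^ ((M:ℤ)+2-(2*p*j+a-b)) := by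
    rw [← zpow_add₀ hq0.ne', ← zpow_add₀ hq0.ne']
    congr 1 <;> ring
  have b2 : q ^ ((M:ℤ)+2-a+b) * q ^ (p*(p+1)*j^2 + j*((p+1)*a + p*((b+3)-2)) + a*((b+3)-1) - (b+1))
      = q ^ ((p*j+a)*((p+1)*j+(b+1))) * q ^ ((M:ℤ)+1) := by
    rw [← zpow_add₀ hq0.ne', ← zpow_add₀ hq0.ne']
    congr 1 <;> ring
  have b3 : q ^ ((M:ℤ)+1) * q ^ (p*(p+1)*j^2 + j*((p+1)*a + p*((b+1)-2)) + a*((b+1)-1) - (b-1))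
      = q ^ ((p*j+a)*((p+1)*j+(b+1))) * q ^ ((M:ℤ)+2-(2*p*j+a+b)) := by
    rw [← zpow_add₀ hq0.ne', ← zpow_add₀ hq0.ne']
    congr 1 <;> ring
  linear_combination (-(qTri q 1 (M+1) (2*p*j+a-b-1))) * b1
    + qTri q 1 (M+1) (2*p*j+a+b+1) * b2
    + qTri q 1 (M+1) (2*p*j+a+b-1) * b3
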